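/- Let n ≥ 1 and ξ₁,…,ξₙ : [0,1] → ℝ continuously differentiable with ξⱼ'(s) ≥ λ for all j, s, where λ ∈ ℝ. Define the probability measures P and Q on the ordered simplex Δₙ with densities proportional to exp(Σⱼ ξⱼ(tⱼ)) and exp(λ Σⱼ tⱼ) respectively. Then for all 1 ≤ i ≤ n and t ∈ [0,1]: P({𝐭 ∈ Δₙ : tᵢ ≤ t}) ≤ Q({𝐭 ∈ Δₙ : tᵢ ≤ t}). -/

import Mathlib

open Set Real MeasureTheory

def orderedSimplex (n : ℕ) : Set (Fin n → ℝ) :=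
  {t | (∀ j, t j ∈ Set.Icc (0:ℝ) 1) ∧ StrictMono t}

open ENNReal

noncomputable section

namespace Stmt9Aux

/-- Open ordered simplex with coordinates in `(a,b)`. -/
def sSet (m : ℕ) (a b : ℝ) : Set (Fin m → ℝ) :=
  {x | (∀ j, x j ∈ Set.Ioo a b) ∧ StrictMono x}

lemma measurableSet_sSet (m : ℕ) (a b : ℝ) : MeasurableSet (sSet m a b) := by
  have : sSet m a b =
      (⋂ j, {x : Fin m → ℝ | x j ∈ Set.Ioo a b}) ∩
      (⋂ (j : Fin m) (j' : Fin m) (_ : j < j'), {x : Fin m → ℝ | x j < x j'}) := by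
    ext x
    simp only [sSet, Set.mem_setOf_eq, Set.mem_inter_iff, Set.mem_iInter]
    exact ⟨fun ⟨h1, h2⟩ => ⟨h1, fun j j' hjj' => h2 hjj'⟩,
      fun ⟨h1, h2⟩ => ⟨h1, fun j j' hjj' => h2 j j' hjj'⟩⟩
  rw [this]
  refine (MeasurableSet.iInter fun j => ?_).inter
    (MeasurableSet.iInter fun j => MeasurableSet.iInter fun j' =>
      MeasurableSet.iInter fun _ => ?_)
  · exact (measurable_pi_apply j) measurableSet_Ioo
  · exact measurableSet_lt (measurable_pi_apply j) (measurable_pi_apply j')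

/-- The key quantity: simplex integral of a product of per-coordinate weights. -/
def S (m : ℕ) (g : Fin m → ℝ → ℝ≥0∞) (a b : ℝ) : ℝ≥0∞ :=
  ∫⁻ x in sSet m a b, ∏ j, g j (x j)

lemma S_zero (g : Fin 0 → ℝ → ℝ≥0∞) (a b : ℝ) : S 0 g a b = 1 := by
  have h1 : sSet 0 a b = Set.univ := by
    ext x; simp [sSet, Set.mem_setOf_eq]
    intro i j h
    exact absurd h (by omega)
  have h2 : (Set.univ : Set (Fin 0 → ℝ)) = Set.pi Set.univ (fun _ => Set.univ) := by
    simp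
  rw [S, h1]
  simp only [Finset.univ_eq_empty, Finset.prod_empty]
  rw [setLIntegral_one, h2, volume_pi_pi]
  simp

lemma mem_sSet_insertNth {m : ℕ} {a b s : ℝ} {y : Fin m → ℝ} :
    Fin.insertNth (α := fun _ => ℝ) (Fin.last m) s y ∈ sSet (m+1) a b ↔ s ∈ Set.Ioo a b ∧ y ∈ sSet m a s := by
  set x := Fin.insertNth (α := fun _ => ℝ) (Fin.last m) s y with hx
  have hlast : x (Fin.last m) = s := Fin.insertNth_apply_same _ _ _
  have hcs : ∀ j : Fin m, x j.castSucc = y j := by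
    intro j
    have : (Fin.last m).succAbove j = j.castSucc := Fin.succAbove_last_apply j
    rw [← this]
    exact Fin.insertNth_apply_succAbove _ _ _ _
  constructor
  · rintro ⟨h1, h2⟩
    refine ⟨by rw [← hlast]; exact h1 _, fun j => ?_, fun j j' hjj' => ?_⟩
    · have h3 := h1 j.castSucc
      rw [hcs] at h3
      have h4 : x j.castSucc < x (Fin.last m) := h2 (Fin.castSucc_lt_last j)
      rw [hcs, hlast] at h4
      exact ⟨h3.1, h4⟩
    · have := h2 (Fin.castSucc_lt_castSucc_iff.mpr hjj')
      rwa [hcs, hcs] at this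
  · rintro ⟨hs, hy1, hy2⟩
    constructor
    · intro j
      refine Fin.lastCases ?_ (fun j => ?_) j
      · rw [hlast]; exact hs
      · rw [hcs]
        exact ⟨(hy1 j).1, lt_trans (hy1 j).2 hs.2⟩
    · intro j j' hjj'
      refine Fin.lastCases ?_ (fun j' hjj' => ?_) j' hjj'
      · intro hjj'
        have hne : j ≠ Fin.last m := ne_of_lt hjj'
        obtain ⟨j0, rfl⟩ := Fin.exists_castSucc_eq.mpr hne
        rw [hcs, hlast]
        exact (hy1 j0).2
      · have hne : j ≠ Fin.last m := ne_of_lt (lt_trans hjj' (Fin.castSucc_lt_last j'))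
        obtain ⟨j0, rfl⟩ := Fin.exists_castSucc_eq.mpr hne
        rw [hcs, hcs]
        exact hy2 (Fin.castSucc_lt_castSucc_iff.mp hjj')

lemma measurable_prodfn {m : ℕ} {g : Fin m → ℝ → ℝ≥0∞} (hg : ∀ j, Measurable (g j)) :
    Measurable fun y : Fin m → ℝ => ∏ j, g j (y j) :=
  Finset.measurable_prod _ fun j _ => (hg j).comp (measurable_pi_apply j)

lemma S_succ (m : ℕ) (g : Fin (m+1) → ℝ → ℝ≥0∞) (hg : ∀ j, Measurable (g j)) (a b : ℝ) :
    S (m+1) g a b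
      = ∫⁻ s in Set.Ioo a b, g (Fin.last m) s * S m (fun j => g j.castSucc) a s := by
  classical
  set e := MeasurableEquiv.piFinSuccAbove (fun _ : Fin (m+1) => ℝ) (Fin.last m) with he
  have hmp : MeasurePreserving e volume volume :=
    volume_preserving_piFinSuccAbove (fun _ : Fin (m+1) => ℝ) (Fin.last m)
  have hmps : MeasurePreserving e.symm volume volume := hmp.symm e
  set F : (Fin (m+1) → ℝ) → ℝ≥0∞ :=
    fun x => Set.indicator (sSet (m+1) a b) (fun x => ∏ j, g j (x j)) x with hF
  have hFmeas : Measurable F :=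
    (measurable_prodfn hg).indicator (measurableSet_sSet _ _ _)
  set E : Set (ℝ × (Fin m → ℝ)) := {p | p.1 ∈ Set.Ioo a b ∧ p.2 ∈ sSet m a p.1} with hE
  have hEmeas : MeasurableSet E := by
    have : E = ({p : ℝ × (Fin m → ℝ) | a < p.1} ∩ {p | p.1 < b}) ∩
        ((⋂ j, ({p : ℝ × (Fin m → ℝ) | a < p.2 j} ∩ {p | p.2 j < p.1})) ∩
          (⋂ (j : Fin m) (j' : Fin m) (_ : j < j'), {p : ℝ × (Fin m → ℝ) | p.2 j < p.2 j'})) := by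
      ext p
      simp only [hE, sSet, Set.mem_setOf_eq, Set.mem_inter_iff, Set.mem_iInter,
        Set.mem_Ioo]
      constructor
      · rintro ⟨⟨h1, h2⟩, h3, h4⟩
        exact ⟨⟨h1, h2⟩, fun j => ⟨(h3 j).1, (h3 j).2⟩, fun j j' hjj' => h4 hjj'⟩
      · rintro ⟨⟨h1, h2⟩, h3, h4⟩
        exact ⟨⟨h1, h2⟩, fun j => ⟨(h3 j).1, (h3 j).2⟩, fun j j' hjj' => h4 j j' hjj'⟩
    rw [this]
    have hsnd : ∀ j : Fin m, Measurable fun p : ℝ × (Fin m → ℝ) => p.2 j :=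
      fun j => (measurable_pi_apply j).comp measurable_snd
    refine ((measurableSet_lt measurable_const measurable_fst).inter
      (measurableSet_lt measurable_fst measurable_const)).inter
      ((MeasurableSet.iInter fun j => (measurableSet_lt measurable_const (hsnd j)).inter
        (measurableSet_lt (hsnd j) measurable_fst)).inter
        (MeasurableSet.iInter fun j => MeasurableSet.iInter fun j' =>
          MeasurableSet.iInter fun _ => measurableSet_lt (hsnd j) (hsnd j')))
  set Φ : (ℝ × (Fin m → ℝ)) → ℝ≥0∞ :=
    fun p => g (Fin.last m) p.1 * ∏ j, g j.castSucc (p.2 j) with hΦ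
  have hΦmeas : Measurable Φ :=
    ((hg _).comp measurable_fst).mul
      ((measurable_prodfn (fun j => hg j.castSucc)).comp measurable_snd)
  have hcomp : ∀ p : ℝ × (Fin m → ℝ), F (e.symm p) = Set.indicator E Φ p := by
    rintro ⟨s, y⟩
    have hesymm : e.symm (s, y) = Fin.insertNth (α := fun _ => ℝ) (Fin.last m) s y := by
      rfl
    have hprod : (∏ j, g j (e.symm (s, y) j))
        = g (Fin.last m) s * ∏ j, g j.castSucc (y j) := by
      rw [hesymm]
      rw [Fin.prod_univ_castSucc]
      have h1 : Fin.insertNth (α := fun _ => ℝ) (Fin.last m) s y (Fin.last m) = s :=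
        Fin.insertNth_apply_same _ _ _
      have h2 : ∀ j : Fin m,
          Fin.insertNth (α := fun _ => ℝ) (Fin.last m) s y j.castSucc = y j := by
        intro j
        have hsa : (Fin.last m).succAbove j = j.castSucc := Fin.succAbove_last_apply j
        rw [← hsa]
        exact Fin.insertNth_apply_succAbove _ _ _ _
      rw [h1, mul_comm]
      congr 1
      exact Finset.prod_congr rfl fun j _ => by rw [h2 j]
    by_cases hp : (s, y) ∈ E
    · have hmem : e.symm (s, y) ∈ sSet (m+1) a b := by
        rw [hesymm, mem_sSet_insertNth]; exact hp
      rw [hF]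
      simp only [Set.indicator_of_mem hmem, Set.indicator_of_mem hp, hΦ, hprod]
    · have hmem : e.symm (s, y) ∉ sSet (m+1) a b := by
        rw [hesymm, mem_sSet_insertNth]; exact hp
      rw [hF]
      simp only [Set.indicator_of_notMem hmem, Set.indicator_of_notMem hp]
  have step1 : S (m+1) g a b = ∫⁻ p, Set.indicator E Φ p ∂(volume : Measure (ℝ × (Fin m → ℝ))) := by
    rw [S, ← lintegral_indicator (measurableSet_sSet _ _ _), ← hF]
    rw [← hmps.lintegral_comp hFmeas]
    exact lintegral_congr hcomp
  rw [step1, Measure.volume_eq_prod, lintegral_prod _ ((hΦmeas.indicator hEmeas).aemeasurable)]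
  have inner : ∀ s : ℝ, (∫⁻ y, Set.indicator E Φ (s, y))
      = Set.indicator (Set.Ioo a b)
          (fun s => g (Fin.last m) s * S m (fun j => g j.castSucc) a s) s := by
    intro s
    by_cases hs : s ∈ Set.Ioo a b
    · have hfn : (fun y => Set.indicator E Φ (s, y))
          = fun y => Set.indicator (sSet m a s)
              (fun y => g (Fin.last m) s * ∏ j, g j.castSucc (y j)) y := by
        funext y
        by_cases hy : y ∈ sSet m a s
        · rw [Set.indicator_of_mem (show (s,y) ∈ E from ⟨hs, hy⟩),
            Set.indicator_of_mem hy]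
        · rw [Set.indicator_of_notMem (show (s,y) ∉ E from fun h => hy h.2),
            Set.indicator_of_notMem hy]
      rw [hfn, lintegral_indicator (measurableSet_sSet _ _ _),
        lintegral_const_mul _ (measurable_prodfn (fun j => hg j.castSucc)),
        Set.indicator_of_mem hs]
      rfl
    · have hfn : (fun y => Set.indicator E Φ (s, y)) = fun _ => 0 := by
        funext y
        exact Set.indicator_of_notMem (fun h => hs h.1) _
      rw [hfn, lintegral_zero, Set.indicator_of_notMem hs]
  rw [lintegral_congr inner, lintegral_indicator measurableSet_Ioo]

lemma measurableSet_sliceSet (m : ℕ) (a : ℝ) :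
    MeasurableSet {p : ℝ × (Fin m → ℝ) | p.2 ∈ sSet m a p.1} := by
  have hsnd : ∀ j : Fin m, Measurable fun p : ℝ × (Fin m → ℝ) => p.2 j :=
    fun j => (measurable_pi_apply j).comp measurable_snd
  have : {p : ℝ × (Fin m → ℝ) | p.2 ∈ sSet m a p.1}
      = (⋂ j, ({p : ℝ × (Fin m → ℝ) | a < p.2 j} ∩ {p | p.2 j < p.1})) ∩
        (⋂ (j : Fin m) (j' : Fin m) (_ : j < j'), {p : ℝ × (Fin m → ℝ) | p.2 j < p.2 j'}) := by
    ext p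
    simp only [sSet, Set.mem_setOf_eq, Set.mem_inter_iff, Set.mem_iInter, Set.mem_Ioo]
    constructor
    · rintro ⟨h1, h2⟩
      exact ⟨fun j => ⟨(h1 j).1, (h1 j).2⟩, fun j j' hjj' => h2 hjj'⟩
    · rintro ⟨h1, h2⟩
      exact ⟨fun j => ⟨(h1 j).1, (h1 j).2⟩, fun j j' hjj' => h2 j j' hjj'⟩
  rw [this]
  exact (MeasurableSet.iInter fun j => (measurableSet_lt measurable_const (hsnd j)).inter
      (measurableSet_lt (hsnd j) measurable_fst)).inter
    (MeasurableSet.iInter fun j => MeasurableSet.iInter fun j' =>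
      MeasurableSet.iInter fun _ => measurableSet_lt (hsnd j) (hsnd j'))

lemma measurable_S (m : ℕ) (g : Fin m → ℝ → ℝ≥0∞) (hg : ∀ j, Measurable (g j)) (a : ℝ) :
    Measurable fun u => S m g a u := by
  have key : (fun u => S m g a u) = fun u =>
      ∫⁻ y, Set.indicator {p : ℝ × (Fin m → ℝ) | p.2 ∈ sSet m a p.1}
        (fun p => ∏ j, g j (p.2 j)) (u, y) := by
    funext u
    have hfn : (fun y => Set.indicator {p : ℝ × (Fin m → ℝ) | p.2 ∈ sSet m a p.1}
        (fun p => ∏ j, g j (p.2 j)) (u, y))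
        = fun y => Set.indicator (sSet m a u) (fun y => ∏ j, g j (y j)) y := by
      funext y
      by_cases hy : y ∈ sSet m a u
      · rw [Set.indicator_of_mem (show ((u,y) : ℝ × (Fin m → ℝ)) ∈ _ from hy),
          Set.indicator_of_mem hy]
      · rw [Set.indicator_of_notMem (show ((u,y) : ℝ × (Fin m → ℝ)) ∉ _ from hy),
          Set.indicator_of_notMem hy]
    rw [hfn, lintegral_indicator (measurableSet_sSet _ _ _)]
    rfl
  rw [key]
  apply Measurable.lintegral_prod_right
  exact ((measurable_prodfn hg).comp measurable_snd).indicator (measurableSet_sliceSet m a)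

lemma Ioo_split {a u v : ℝ} (huv : u ≤ v) :
    Set.Ioo a v = Set.Ioo a u ∪ (Set.Ioo a v ∩ Set.Ici u) := by
  ext x
  simp only [Set.mem_Ioo, Set.mem_union, Set.mem_inter_iff, Set.mem_Ici]
  constructor
  · rintro ⟨h1, h2⟩
    rcases lt_or_ge x u with h | h
    · exact Or.inl ⟨h1, h⟩
    · exact Or.inr ⟨⟨h1, h2⟩, h⟩
  · rintro (⟨h1, h2⟩ | ⟨⟨h1, h2⟩, _⟩)
    · exact ⟨h1, lt_of_lt_of_le h2 huv⟩
    · exact ⟨h1, h2⟩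

lemma S_split {m : ℕ} {g : Fin (m+1) → ℝ → ℝ≥0∞} (hg : ∀ j, Measurable (g j))
    {a u v : ℝ} (huv : u ≤ v) :
    S (m+1) g a v = S (m+1) g a u
      + ∫⁻ s in Set.Ioo a v ∩ Set.Ici u,
          g (Fin.last m) s * S m (fun j => g j.castSucc) a s := by
  have hdisj : Disjoint (Set.Ioo a u) (Set.Ioo a v ∩ Set.Ici u) :=
    Set.disjoint_left.mpr fun x hx hx' => absurd hx.2 (not_lt.mpr hx'.2)
  rw [S_succ m g hg a v]
  nth_rewrite 1 [Ioo_split huv]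
  rw [lintegral_union (measurableSet_Ioo.inter measurableSet_Ici) hdisj,
    ← S_succ m g hg a u]

theorem lemA : ∀ (m : ℕ) (g h : Fin m → ℝ → ℝ≥0∞), (∀ j, Measurable (g j)) →
    (∀ j, Measurable (h j)) →
    (∀ j u v, u ≤ v → g j u * h j v ≤ g j v * h j u) →
    ∀ a u v, a ≤ u → u ≤ v →
    S m g a u * S m h a v ≤ S m g a v * S m h a u := by
  intro m
  induction m with
  | zero =>
    intro g h _ _ _ a u v _ _
    rw [S_zero, S_zero, S_zero, S_zero]
  | succ m ih =>
    intro g h hg hh hmlr a u v hau huv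
    have hgcm : ∀ j : Fin m, Measurable (g j.castSucc) := fun j => hg j.castSucc
    have hhcm : ∀ j : Fin m, Measurable (h j.castSucc) := fun j => hh j.castSucc
    have hPgm : Measurable fun s => S m (fun j => g j.castSucc) a s :=
      measurable_S m _ hgcm a
    have hPhm : Measurable fun s => S m (fun j => h j.castSucc) a s :=
      measurable_S m _ hhcm a
    have hGP : Measurable fun s => g (Fin.last m) s * S m (fun j => g j.castSucc) a s :=
      (hg _).mul hPgm
    have hHP : Measurable fun s => h (Fin.last m) s * S m (fun j => h j.castSucc) a s :=
      (hh _).mul hPhm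
    rw [S_split hg huv, S_split hh huv, mul_add, add_mul]
    refine add_le_add_right ?_ _
    have key : ∀ s : ℝ, u ≤ s →
        S (m+1) g a u * (h (Fin.last m) s * S m (fun j => h j.castSucc) a s)
          ≤ (g (Fin.last m) s * S m (fun j => g j.castSucc) a s) * S (m+1) h a u := by
      intro s hus
      rw [S_succ m g hg a u, S_succ m h hh a u]
      calc (∫⁻ r in Set.Ioo a u, g (Fin.last m) r * S m (fun j => g j.castSucc) a r)
            * (h (Fin.last m) s * S m (fun j => h j.castSucc) a s)
          = ∫⁻ r in Set.Ioo a u,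
              (g (Fin.last m) r * S m (fun j => g j.castSucc) a r)
                * (h (Fin.last m) s * S m (fun j => h j.castSucc) a s) :=
            (lintegral_mul_const _ hGP).symm
        _ ≤ ∫⁻ r in Set.Ioo a u,
              (h (Fin.last m) r * S m (fun j => h j.castSucc) a r)
                * (g (Fin.last m) s * S m (fun j => g j.castSucc) a s) := by
            refine setLIntegral_mono (hHP.mul measurable_const) ?_
            intro r hr
            have har : a ≤ r := le_of_lt hr.1
            have hrs : r ≤ s := le_trans (le_of_lt hr.2) hus
            have h1 : g (Fin.last m) r * h (Fin.last m) s
                ≤ g (Fin.last m) s * h (Fin.last m) r := hmlr (Fin.last m) r s hrs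
            have h2 : S m (fun j => g j.castSucc) a r * S m (fun j => h j.castSucc) a s
                ≤ S m (fun j => g j.castSucc) a s * S m (fun j => h j.castSucc) a r :=
              ih _ _ hgcm hhcm (fun j => hmlr j.castSucc) a r s har hrs
            calc g (Fin.last m) r * S m (fun j => g j.castSucc) a r
                  * (h (Fin.last m) s * S m (fun j => h j.castSucc) a s)
                = (g (Fin.last m) r * h (Fin.last m) s)
                    * (S m (fun j => g j.castSucc) a r * S m (fun j => h j.castSucc) a s) := by
                  ring
              _ ≤ (g (Fin.last m) s * h (Fin.last m) r)
                    * (S m (fun j => g j.castSucc) a s * S m (fun j => h j.castSucc) a r) :=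
                  mul_le_mul' h1 h2
              _ = h (Fin.last m) r * S m (fun j => h j.castSucc) a r
                    * (g (Fin.last m) s * S m (fun j => g j.castSucc) a s) := by ring
        _ = (∫⁻ r in Set.Ioo a u, h (Fin.last m) r * S m (fun j => h j.castSucc) a r)
              * (g (Fin.last m) s * S m (fun j => g j.castSucc) a s) :=
            lintegral_mul_const _ hHP
        _ = (g (Fin.last m) s * S m (fun j => g j.castSucc) a s)
              * ∫⁻ r in Set.Ioo a u, h (Fin.last m) r * S m (fun j => h j.castSucc) a r :=
            mul_comm _ _
    calc S (m+1) g a u * ∫⁻ s in Set.Ioo a v ∩ Set.Ici u,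
          h (Fin.last m) s * S m (fun j => h j.castSucc) a s
        = ∫⁻ s in Set.Ioo a v ∩ Set.Ici u,
            S (m+1) g a u * (h (Fin.last m) s * S m (fun j => h j.castSucc) a s) :=
          (lintegral_const_mul _ hHP).symm
      _ ≤ ∫⁻ s in Set.Ioo a v ∩ Set.Ici u,
            (g (Fin.last m) s * S m (fun j => g j.castSucc) a s) * S (m+1) h a u := by
          refine setLIntegral_mono (hGP.mul measurable_const) ?_
          intro s hs
          exact key s hs.2
      _ = (∫⁻ s in Set.Ioo a v ∩ Set.Ici u,
            g (Fin.last m) s * S m (fun j => g j.castSucc) a s) * S (m+1) h a u :=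
          lintegral_mul_const _ hGP

/-- Update family: multiply coordinate `k`'s weight by `φ`. -/
def upd {m : ℕ} (g : Fin m → ℝ → ℝ≥0∞) (k : Fin m) (φ : ℝ → ℝ≥0∞) : Fin m → ℝ → ℝ≥0∞ :=
  Function.update g k (fun s => φ s * g k s)

lemma upd_measurable {m : ℕ} {g : Fin m → ℝ → ℝ≥0∞} {k : Fin m} {φ : ℝ → ℝ≥0∞}
    (hg : ∀ j, Measurable (g j)) (hφ : Measurable φ) : ∀ j, Measurable (upd g k φ j) := by
  intro j
  by_cases hj : j = k
  · subst hj
    rw [upd, Function.update_self]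
    exact hφ.mul (hg j)
  · rw [upd, Function.update_of_ne hj]
    exact hg j

lemma prod_upd {m : ℕ} (g : Fin m → ℝ → ℝ≥0∞) (k : Fin m) (φ : ℝ → ℝ≥0∞)
    (x : Fin m → ℝ) :
    ∏ j, upd g k φ j (x j) = φ (x k) * ∏ j, g j (x j) := by
  classical
  rw [← Finset.mul_prod_erase Finset.univ (fun j => upd g k φ j (x j)) (Finset.mem_univ k),
    ← Finset.mul_prod_erase Finset.univ (fun j => g j (x j)) (Finset.mem_univ k)]
  have h1 : upd g k φ k (x k) = φ (x k) * g k (x k) := by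

    rw [upd, Function.update_self]
  have h2 : ∀ j ∈ Finset.univ.erase k, upd g k φ j (x j) = g j (x j) := by
    intro j hj
    rw [upd, Function.update_of_ne (Finset.ne_of_mem_erase hj)]
  rw [Finset.prod_congr rfl h2, h1, mul_assoc]

lemma S_le_pow_mul {m : ℕ} {g h : Fin m → ℝ → ℝ≥0∞} (hh : ∀ j, Measurable (h j))
    {K : ℝ≥0∞} (hgh : ∀ j s, g j s ≤ K * h j s) (a b : ℝ) :
    S m g a b ≤ K ^ m * S m h a b := by
  rw [S, S, ← lintegral_const_mul _ (measurable_prodfn hh)]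
  refine setLIntegral_mono ((measurable_prodfn hh).const_mul _) ?_
  intro x _
  calc ∏ j, g j (x j) ≤ ∏ j, K * h j (x j) :=
        Finset.prod_le_prod' fun j _ => hgh j (x j)
    _ = K ^ m * ∏ j, h j (x j) := by
        rw [Finset.prod_mul_distrib, Finset.prod_const, Finset.card_univ, Fintype.card_fin]

lemma S_lt_top {m : ℕ} {g : Fin m → ℝ → ℝ≥0∞} {C : ℝ≥0∞} (hC : C ≠ ∞)
    (hgC : ∀ j s, g j s ≤ C) (a b : ℝ) : S m g a b < ∞ := by
  have h1 : S m g a b ≤ C ^ m * volume (sSet m a b) := by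
    rw [S]
    calc ∫⁻ x in sSet m a b, ∏ j, g j (x j)
        ≤ ∫⁻ _x in sSet m a b, C ^ m := by
          refine setLIntegral_mono measurable_const ?_
          intro x _
          calc ∏ j, g j (x j) ≤ ∏ _j : Fin m, C :=
                Finset.prod_le_prod' fun j _ => hgC j (x j)
            _ = C ^ m := by rw [Finset.prod_const, Finset.card_univ, Fintype.card_fin]
      _ = C ^ m * volume (sSet m a b) := setLIntegral_const _ _
  have h2 : volume (sSet m a b) ≤ ENNReal.ofReal (b - a) ^ m := by
    have hsub : sSet m a b ⊆ Set.pi Set.univ (fun _ : Fin m => Set.Ioo a b) := by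
      intro x hx
      rw [Set.mem_univ_pi]
      exact hx.1
    calc volume (sSet m a b) ≤ volume (Set.pi Set.univ (fun _ : Fin m => Set.Ioo a b)) :=
          measure_mono hsub
      _ = ∏ _j : Fin m, volume (Set.Ioo a b) := volume_pi_pi _
      _ = ENNReal.ofReal (b - a) ^ m := by
          rw [Real.volume_Ioo, Finset.prod_const, Finset.card_univ, Fintype.card_fin]
  calc S m g a b ≤ C ^ m * ENNReal.ofReal (b - a) ^ m :=
        le_trans h1 (mul_le_mul_right h2 _)
    _ < ∞ := ENNReal.mul_lt_top (ENNReal.pow_lt_top hC.lt_top)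
        (ENNReal.pow_lt_top ENNReal.ofReal_lt_top)

lemma rearrange {α β A B : ℝ≥0∞} (hba : β ≤ α) (hAB : A ≤ B) :
    α * A + β * B ≤ β * A + α * B := by
  have hα : α = (α - β) + β := (tsub_add_cancel_of_le hba).symm
  calc α * A + β * B = ((α - β) + β) * A + β * B := by rw [← hα]
    _ = (α - β) * A + (β * A + β * B) := by rw [add_mul, add_assoc]
    _ ≤ (α - β) * B + (β * A + β * B) :=
        add_le_add_left (mul_le_mul_right hAB _) _
    _ = β * A + ((α - β) * B + β * B) := by ring
    _ = β * A + ((α - β) + β) * B := by rw [add_mul]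
    _ = β * A + α * B := by rw [← hα]

lemma double_int {u1 u2 : ℝ → ℝ≥0∞} (hu1 : Measurable u1) (hu2 : Measurable u2)
    (I J : Set ℝ) :
    (∫⁻ x in I, u1 x) * (∫⁻ y in J, u2 y) + (∫⁻ y in J, u1 y) * (∫⁻ x in I, u2 x)
      = ∫⁻ x in I, ∫⁻ y in J, (u1 x * u2 y + u1 y * u2 x) := by
  have inner : ∀ x : ℝ, (∫⁻ y in J, (u1 x * u2 y + u1 y * u2 x))
      = u1 x * (∫⁻ y in J, u2 y) + (∫⁻ y in J, u1 y) * u2 x := by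
    intro x
    rw [lintegral_add_left ((hu2.const_mul (u1 x)))]
    rw [lintegral_const_mul _ hu2, lintegral_mul_const _ hu1]
  calc (∫⁻ x in I, u1 x) * (∫⁻ y in J, u2 y) + (∫⁻ y in J, u1 y) * (∫⁻ x in I, u2 x)
      = ∫⁻ x in I, (u1 x * (∫⁻ y in J, u2 y) + (∫⁻ y in J, u1 y) * u2 x) := by
        rw [lintegral_add_left (hu1.mul_const _), lintegral_mul_const _ hu1,
          lintegral_const_mul _ hu2]
    _ = ∫⁻ x in I, ∫⁻ y in J, (u1 x * u2 y + u1 y * u2 x) := by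
        exact (lintegral_congr fun x => (inner x).symm)

lemma upd_castSucc {m : ℕ} (g : Fin (m+1) → ℝ → ℝ≥0∞) (k0 : Fin m) (φ : ℝ → ℝ≥0∞) :
    (fun j : Fin m => upd g k0.castSucc φ j.castSucc)
      = upd (fun j : Fin m => g j.castSucc) k0 φ := by
  funext j
  by_cases hj : j = k0
  · subst hj
    rw [upd, upd, Function.update_self, Function.update_self]
  · rw [upd, upd, Function.update_of_ne (fun h => hj (Fin.castSucc_injective m h)),
      Function.update_of_ne hj]

lemma upd_last {m : ℕ} (g : Fin (m+1) → ℝ → ℝ≥0∞) (k0 : Fin m) (φ : ℝ → ℝ≥0∞) :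
    upd g k0.castSucc φ (Fin.last m) = g (Fin.last m) := by
  rw [upd, Function.update_of_ne (Fin.ne_of_gt (Fin.castSucc_lt_last k0))]

lemma upd_last_castSucc {m : ℕ} (g : Fin (m+1) → ℝ → ℝ≥0∞) (φ : ℝ → ℝ≥0∞) :
    (fun j : Fin m => upd g (Fin.last m) φ j.castSucc) = fun j : Fin m => g j.castSucc := by
  funext j
  rw [upd, Function.update_of_ne (Fin.ne_of_lt (Fin.castSucc_lt_last j))]

lemma upd_last_same {m : ℕ} (g : Fin (m+1) → ℝ → ℝ≥0∞) (φ : ℝ → ℝ≥0∞) :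
    upd g (Fin.last m) φ (Fin.last m) = fun s => φ s * g (Fin.last m) s := by
  rw [upd, Function.update_self]

theorem master : ∀ (m : ℕ) (g h : Fin m → ℝ → ℝ≥0∞) (k : Fin m) (φ : ℝ → ℝ≥0∞),
    (∀ j, Measurable (g j)) → (∀ j, Measurable (h j)) → Measurable φ →
    (∀ s, φ s ≤ 1) → (∀ u v, u ≤ v → φ v ≤ φ u) →
    (∀ j u v, u ≤ v → g j u * h j v ≤ g j v * h j u) →
    ∀ (C : ℝ≥0∞), C ≠ ∞ → (∀ j s, h j s ≤ C) →
    ∀ (K : ℝ≥0∞), (∀ j s, g j s ≤ K * h j s) →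
    ∀ a x y, a ≤ x → x ≤ y →
    S m (upd g k φ) a x * S m h a y + S m (upd g k φ) a y * S m h a x
      ≤ S m g a x * S m (upd h k φ) a y + S m g a y * S m (upd h k φ) a x := by
  intro m
  induction m with
  | zero => intro g h k; exact absurd k.2 (by omega)
  | succ m ih =>
    intro g h k φ hg hh hφ hφ1 hφa hmlr C hC hhC K hK a x y hax hxy
    have hg' : ∀ j, Measurable (upd g k φ j) := upd_measurable hg hφ
    have hh' : ∀ j, Measurable (upd h k φ j) := upd_measurable hh hφ
    have hgcm : ∀ j : Fin m, Measurable (g j.castSucc) := fun j => hg _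
    have hhcm : ∀ j : Fin m, Measurable (h j.castSucc) := fun j => hh _
    rw [S_succ m _ hg' a x, S_succ m _ hg' a y, S_succ m _ hh a x, S_succ m _ hh a y,
      S_succ m _ hg a x, S_succ m _ hg a y, S_succ m _ hh' a x, S_succ m _ hh' a y]
    rcases Fin.eq_castSucc_or_eq_last k with ⟨k0, rfl⟩ | rfl
    · -- k in the lower block
      simp only [upd_last g k0 φ, upd_last h k0 φ, upd_castSucc g k0 φ, upd_castSucc h k0 φ]
      have hu1m : Measurable fun s =>
          g (Fin.last m) s * S m (upd (fun j => g j.castSucc) k0 φ) a s :=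
        (hg _).mul (measurable_S m _ (upd_measurable hgcm hφ) a)
      have hu2m : Measurable fun s =>
          h (Fin.last m) s * S m (fun j : Fin m => h j.castSucc) a s :=
        (hh _).mul (measurable_S m _ hhcm a)
      have hu3m : Measurable fun s =>
          g (Fin.last m) s * S m (fun j : Fin m => g j.castSucc) a s :=
        (hg _).mul (measurable_S m _ hgcm a)
      have hu4m : Measurable fun s =>
          h (Fin.last m) s * S m (upd (fun j => h j.castSucc) k0 φ) a s :=
        (hh _).mul (measurable_S m _ (upd_measurable hhcm hφ) a)
      rw [double_int hu1m hu2m (Set.Ioo a x) (Set.Ioo a y),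
        double_int hu3m hu4m (Set.Ioo a x) (Set.Ioo a y)]
      have ptwise : ∀ s r : ℝ, a < s → a < r →
          (g (Fin.last m) s * S m (upd (fun j => g j.castSucc) k0 φ) a s)
            * (h (Fin.last m) r * S m (fun j : Fin m => h j.castSucc) a r)
          + (g (Fin.last m) r * S m (upd (fun j => g j.castSucc) k0 φ) a r)
            * (h (Fin.last m) s * S m (fun j : Fin m => h j.castSucc) a s)
          ≤ (g (Fin.last m) s * S m (fun j : Fin m => g j.castSucc) a s)
            * (h (Fin.last m) r * S m (upd (fun j => h j.castSucc) k0 φ) a r)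
          + (g (Fin.last m) r * S m (fun j : Fin m => g j.castSucc) a r)
            * (h (Fin.last m) s * S m (upd (fun j => h j.castSucc) k0 φ) a s) := by
        have main : ∀ s r : ℝ, a < s → s ≤ r →
            (g (Fin.last m) s * S m (upd (fun j => g j.castSucc) k0 φ) a s)
              * (h (Fin.last m) r * S m (fun j : Fin m => h j.castSucc) a r)
            + (g (Fin.last m) r * S m (upd (fun j => g j.castSucc) k0 φ) a r)
              * (h (Fin.last m) s * S m (fun j : Fin m => h j.castSucc) a s)
            ≤ (g (Fin.last m) s * S m (fun j : Fin m => g j.castSucc) a s)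
              * (h (Fin.last m) r * S m (upd (fun j => h j.castSucc) k0 φ) a r)
            + (g (Fin.last m) r * S m (fun j : Fin m => g j.castSucc) a r)
              * (h (Fin.last m) s * S m (upd (fun j => h j.castSucc) k0 φ) a s) := by
          intro s r has hsr
          have har : a ≤ s := le_of_lt has
          have hmlrc : ∀ (j : Fin m) u v, u ≤ v →
              g j.castSucc u * h j.castSucc v ≤ g j.castSucc v * h j.castSucc u :=
            fun j u v huv => hmlr j.castSucc u v huv
          have htwo : S m (upd (fun j => g j.castSucc) k0 φ) a s
                * S m (fun j : Fin m => h j.castSucc) a r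
              + S m (upd (fun j => g j.castSucc) k0 φ) a r
                * S m (fun j : Fin m => h j.castSucc) a s
              ≤ S m (fun j : Fin m => g j.castSucc) a s
                * S m (upd (fun j => h j.castSucc) k0 φ) a r
              + S m (fun j : Fin m => g j.castSucc) a r
                * S m (upd (fun j => h j.castSucc) k0 φ) a s :=
            ih (fun j => g j.castSucc) (fun j => h j.castSucc) k0 φ hgcm hhcm hφ hφ1 hφa
              hmlrc C hC (fun j sx => hhC j.castSucc sx) K (fun j sx => hK j.castSucc sx)
              a s r har hsr
          have hone : S m (upd (fun j => g j.castSucc) k0 φ) a r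
                * S m (fun j : Fin m => h j.castSucc) a r
              ≤ S m (fun j : Fin m => g j.castSucc) a r
                * S m (upd (fun j => h j.castSucc) k0 φ) a r := by
            have h2pt := ih (fun j => g j.castSucc) (fun j => h j.castSucc) k0 φ hgcm hhcm hφ
              hφ1 hφa hmlrc C hC (fun j sx => hhC j.castSucc sx) K
              (fun j sx => hK j.castSucc sx) a r r (le_trans har hsr) le_rfl
            have h2 : (2 : ℝ≥0∞) * (S m (upd (fun j => g j.castSucc) k0 φ) a r
                * S m (fun j : Fin m => h j.castSucc) a r)
                ≤ 2 * (S m (fun j : Fin m => g j.castSucc) a r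
                * S m (upd (fun j => h j.castSucc) k0 φ) a r) := by
              rw [two_mul, two_mul]
              exact h2pt
            exact (ENNReal.mul_le_mul_iff_right two_ne_zero ENNReal.ofNat_ne_top).mp h2
          have hQQ' : S m (fun j : Fin m => h j.castSucc) a s
                * S m (upd (fun j => h j.castSucc) k0 φ) a r
              ≤ S m (fun j : Fin m => h j.castSucc) a r
                * S m (upd (fun j => h j.castSucc) k0 φ) a s := by
            refine lemA m (fun j => h j.castSucc) (upd (fun j => h j.castSucc) k0 φ) hhcm
              (upd_measurable hhcm hφ) ?_ a s r har hsr
            intro j u v huv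
            by_cases hj : j = k0
            · subst hj
              rw [upd, Function.update_self]
              calc h j.castSucc u * (φ v * h j.castSucc v)
                  = φ v * (h j.castSucc u * h j.castSucc v) := by ring
                _ ≤ φ u * (h j.castSucc u * h j.castSucc v) :=
                    mul_le_mul_left (hφa u v huv) _
                _ = h j.castSucc v * (φ u * h j.castSucc u) := by ring
            · rw [upd, Function.update_of_ne hj, mul_comm]
          have hecross : S m (upd (fun j => g j.castSucc) k0 φ) a r
                * S m (fun j : Fin m => h j.castSucc) a s
              ≤ S m (fun j : Fin m => g j.castSucc) a r
                * S m (upd (fun j => h j.castSucc) k0 φ) a s := by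
            rcases eq_or_ne (S m (upd (fun j => h j.castSucc) k0 φ) a r) 0 with hz | hz
            · have hP'0 : S m (upd (fun j => g j.castSucc) k0 φ) a r = 0 := by
                have hle : S m (upd (fun j => g j.castSucc) k0 φ) a r
                    ≤ K ^ m * S m (upd (fun j => h j.castSucc) k0 φ) a r := by
                  refine S_le_pow_mul (upd_measurable hhcm hφ) ?_ a r
                  intro j sx
                  by_cases hj : j = k0
                  · subst hj
                    rw [upd, upd, Function.update_self, Function.update_self]
                    calc φ sx * g j.castSucc sx ≤ φ sx * (K * h j.castSucc sx) :=
                          mul_le_mul_right (hK j.castSucc sx) _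
                      _ = K * (φ sx * h j.castSucc sx) := by ring
                  · rw [upd, upd, Function.update_of_ne hj, Function.update_of_ne hj]
                    exact hK j.castSucc sx
                rw [hz, mul_zero] at hle
                exact le_antisymm hle zero_le
              rw [hP'0, zero_mul]
              exact zero_le
            · have hfin : S m (upd (fun j => h j.castSucc) k0 φ) a r ≠ ∞ := by
                refine (S_lt_top hC ?_ a r).ne
                intro j sx
                by_cases hj : j = k0
                · subst hj
                  rw [upd, Function.update_self]
                  calc φ sx * h j.castSucc sx ≤ 1 * h j.castSucc sx :=
                        mul_le_mul_left (hφ1 sx) _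
                    _ = h j.castSucc sx := one_mul _
                    _ ≤ C := hhC j.castSucc sx
                · rw [upd, Function.update_of_ne hj]
                  exact hhC j.castSucc sx
              refine (ENNReal.mul_le_mul_iff_left hz hfin).mp ?_
              calc S m (upd (fun j => g j.castSucc) k0 φ) a r
                    * S m (fun j : Fin m => h j.castSucc) a s
                    * S m (upd (fun j => h j.castSucc) k0 φ) a r
                  = S m (upd (fun j => g j.castSucc) k0 φ) a r
                    * (S m (fun j : Fin m => h j.castSucc) a s
                      * S m (upd (fun j => h j.castSucc) k0 φ) a r) := by ring
                _ ≤ S m (upd (fun j => g j.castSucc) k0 φ) a r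
                    * (S m (fun j : Fin m => h j.castSucc) a r
                      * S m (upd (fun j => h j.castSucc) k0 φ) a s) :=
                    mul_le_mul_right hQQ' _
                _ = (S m (upd (fun j => g j.castSucc) k0 φ) a r
                      * S m (fun j : Fin m => h j.castSucc) a r)
                    * S m (upd (fun j => h j.castSucc) k0 φ) a s := by ring
                _ ≤ (S m (fun j : Fin m => g j.castSucc) a r
                      * S m (upd (fun j => h j.castSucc) k0 φ) a r)
                    * S m (upd (fun j => h j.castSucc) k0 φ) a s :=
                    mul_le_mul_left hone _
                _ = S m (fun j : Fin m => g j.castSucc) a r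
                    * S m (upd (fun j => h j.castSucc) k0 φ) a s
                    * S m (upd (fun j => h j.castSucc) k0 φ) a r := by ring
          have hc12 : g (Fin.last m) s * h (Fin.last m) r
              ≤ g (Fin.last m) r * h (Fin.last m) s := hmlr (Fin.last m) s r hsr
          obtain ⟨d, hd⟩ : ∃ d, g (Fin.last m) r * h (Fin.last m) s
              = g (Fin.last m) s * h (Fin.last m) r + d :=
            ⟨_, (add_tsub_cancel_of_le hc12).symm⟩
          calc (g (Fin.last m) s * S m (upd (fun j => g j.castSucc) k0 φ) a s)
                * (h (Fin.last m) r * S m (fun j : Fin m => h j.castSucc) a r)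
              + (g (Fin.last m) r * S m (upd (fun j => g j.castSucc) k0 φ) a r)
                * (h (Fin.last m) s * S m (fun j : Fin m => h j.castSucc) a s)
              = (g (Fin.last m) s * h (Fin.last m) r)
                  * (S m (upd (fun j => g j.castSucc) k0 φ) a s
                    * S m (fun j : Fin m => h j.castSucc) a r)
                + (g (Fin.last m) r * h (Fin.last m) s)
                  * (S m (upd (fun j => g j.castSucc) k0 φ) a r
                    * S m (fun j : Fin m => h j.castSucc) a s) := by ring
            _ = (g (Fin.last m) s * h (Fin.last m) r)
                  * (S m (upd (fun j => g j.castSucc) k0 φ) a s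
                    * S m (fun j : Fin m => h j.castSucc) a r
                    + S m (upd (fun j => g j.castSucc) k0 φ) a r
                    * S m (fun j : Fin m => h j.castSucc) a s)
                + d
                  * (S m (upd (fun j => g j.castSucc) k0 φ) a r
                    * S m (fun j : Fin m => h j.castSucc) a s) := by
                rw [hd]; ring
            _ ≤ (g (Fin.last m) s * h (Fin.last m) r)
                  * (S m (fun j : Fin m => g j.castSucc) a s
                    * S m (upd (fun j => h j.castSucc) k0 φ) a r
                    + S m (fun j : Fin m => g j.castSucc) a r
                    * S m (upd (fun j => h j.castSucc) k0 φ) a s)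
                + d
                  * (S m (fun j : Fin m => g j.castSucc) a r
                    * S m (upd (fun j => h j.castSucc) k0 φ) a s) :=
                add_le_add (mul_le_mul_right htwo _) (mul_le_mul_right hecross _)
            _ = (g (Fin.last m) s * h (Fin.last m) r)
                  * (S m (fun j : Fin m => g j.castSucc) a s
                    * S m (upd (fun j => h j.castSucc) k0 φ) a r)
                + (g (Fin.last m) s * h (Fin.last m) r + d)
                  * (S m (fun j : Fin m => g j.castSucc) a r
                    * S m (upd (fun j => h j.castSucc) k0 φ) a s) := by ring
            _ = (g (Fin.last m) s * S m (fun j : Fin m => g j.castSucc) a s)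
                * (h (Fin.last m) r * S m (upd (fun j => h j.castSucc) k0 φ) a r)
              + (g (Fin.last m) r * S m (fun j : Fin m => g j.castSucc) a r)
                * (h (Fin.last m) s * S m (upd (fun j => h j.castSucc) k0 φ) a s) := by
                rw [← hd]; ring
        intro s r has har
        rcases le_total s r with hsr | hrs
        · exact main s r has hsr
        · rw [add_comm, add_comm ((g (Fin.last m) s * S m (fun j : Fin m => g j.castSucc) a s)
            * (h (Fin.last m) r * S m (upd (fun j => h j.castSucc) k0 φ) a r))]
          exact main r s har hrs
      refine setLIntegral_mono ?_ ?_
      · exact Measurable.lintegral_prod_right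
          ((((hu3m.comp measurable_fst).mul (hu4m.comp measurable_snd)).add
            ((hu3m.comp measurable_snd).mul (hu4m.comp measurable_fst))))
      · intro xx hxx
        refine setLIntegral_mono ((measurable_const.mul hu4m).add
          (hu3m.mul measurable_const)) ?_
        intro yy hyy
        exact ptwise xx yy hxx.1 hyy.1
    · -- k is the last coordinate
      simp only [upd_last_same g φ, upd_last_same h φ, upd_last_castSucc g φ,
        upd_last_castSucc h φ]
      have hu1m : Measurable fun s =>
          (fun s => φ s * g (Fin.last m) s) s * S m (fun j : Fin m => g j.castSucc) a s :=
        ((hφ.mul (hg _))).mul (measurable_S m _ hgcm a)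
      have hu2m : Measurable fun s =>
          h (Fin.last m) s * S m (fun j : Fin m => h j.castSucc) a s :=
        (hh _).mul (measurable_S m _ hhcm a)
      have hu3m : Measurable fun s =>
          g (Fin.last m) s * S m (fun j : Fin m => g j.castSucc) a s :=
        (hg _).mul (measurable_S m _ hgcm a)
      have hu4m : Measurable fun s =>
          (fun s => φ s * h (Fin.last m) s) s * S m (fun j : Fin m => h j.castSucc) a s :=
        ((hφ.mul (hh _))).mul (measurable_S m _ hhcm a)
      rw [double_int hu1m hu2m (Set.Ioo a x) (Set.Ioo a y),
        double_int hu3m hu4m (Set.Ioo a x) (Set.Ioo a y)]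
      have ptwise : ∀ s r : ℝ, a < s → a < r →
          (φ s * g (Fin.last m) s * S m (fun j : Fin m => g j.castSucc) a s)
            * (h (Fin.last m) r * S m (fun j : Fin m => h j.castSucc) a r)
          + (φ r * g (Fin.last m) r * S m (fun j : Fin m => g j.castSucc) a r)
            * (h (Fin.last m) s * S m (fun j : Fin m => h j.castSucc) a s)
          ≤ (g (Fin.last m) s * S m (fun j : Fin m => g j.castSucc) a s)
            * (φ r * h (Fin.last m) r * S m (fun j : Fin m => h j.castSucc) a r)
          + (g (Fin.last m) r * S m (fun j : Fin m => g j.castSucc) a r)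
            * (φ s * h (Fin.last m) s * S m (fun j : Fin m => h j.castSucc) a s) := by
        have main : ∀ s r : ℝ, a < s → s ≤ r →
            (φ s * g (Fin.last m) s * S m (fun j : Fin m => g j.castSucc) a s)
              * (h (Fin.last m) r * S m (fun j : Fin m => h j.castSucc) a r)
            + (φ r * g (Fin.last m) r * S m (fun j : Fin m => g j.castSucc) a r)
              * (h (Fin.last m) s * S m (fun j : Fin m => h j.castSucc) a s)
            ≤ (g (Fin.last m) s * S m (fun j : Fin m => g j.castSucc) a s)
              * (φ r * h (Fin.last m) r * S m (fun j : Fin m => h j.castSucc) a r)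
            + (g (Fin.last m) r * S m (fun j : Fin m => g j.castSucc) a r)
              * (φ s * h (Fin.last m) s * S m (fun j : Fin m => h j.castSucc) a s) := by
          intro s r has hsr
          have har : a ≤ s := le_of_lt has
          have hA0B0 : (g (Fin.last m) s * S m (fun j : Fin m => g j.castSucc) a s)
                * (h (Fin.last m) r * S m (fun j : Fin m => h j.castSucc) a r)
              ≤ (g (Fin.last m) r * S m (fun j : Fin m => g j.castSucc) a r)
                * (h (Fin.last m) s * S m (fun j : Fin m => h j.castSucc) a s) := by
            have h1 : g (Fin.last m) s * h (Fin.last m) r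
                ≤ g (Fin.last m) r * h (Fin.last m) s := hmlr (Fin.last m) s r hsr
            have h2 : S m (fun j : Fin m => g j.castSucc) a s
                  * S m (fun j : Fin m => h j.castSucc) a r
                ≤ S m (fun j : Fin m => g j.castSucc) a r
                  * S m (fun j : Fin m => h j.castSucc) a s :=
              lemA m _ _ hgcm hhcm (fun j u v huv => hmlr j.castSucc u v huv) a s r har hsr
            calc (g (Fin.last m) s * S m (fun j : Fin m => g j.castSucc) a s)
                  * (h (Fin.last m) r * S m (fun j : Fin m => h j.castSucc) a r)
                = (g (Fin.last m) s * h (Fin.last m) r)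
                  * (S m (fun j : Fin m => g j.castSucc) a s
                    * S m (fun j : Fin m => h j.castSucc) a r) := by ring
              _ ≤ (g (Fin.last m) r * h (Fin.last m) s)
                  * (S m (fun j : Fin m => g j.castSucc) a r
                    * S m (fun j : Fin m => h j.castSucc) a s) := mul_le_mul' h1 h2
              _ = (g (Fin.last m) r * S m (fun j : Fin m => g j.castSucc) a r)
                  * (h (Fin.last m) s * S m (fun j : Fin m => h j.castSucc) a s) := by ring
          have hre := rearrange (hφa s r hsr) hA0B0
          calc (φ s * g (Fin.last m) s * S m (fun j : Fin m => g j.castSucc) a s)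
                * (h (Fin.last m) r * S m (fun j : Fin m => h j.castSucc) a r)
              + (φ r * g (Fin.last m) r * S m (fun j : Fin m => g j.castSucc) a r)
                * (h (Fin.last m) s * S m (fun j : Fin m => h j.castSucc) a s)
              = φ s * ((g (Fin.last m) s * S m (fun j : Fin m => g j.castSucc) a s)
                  * (h (Fin.last m) r * S m (fun j : Fin m => h j.castSucc) a r))
                + φ r * ((g (Fin.last m) r * S m (fun j : Fin m => g j.castSucc) a r)
                  * (h (Fin.last m) s * S m (fun j : Fin m => h j.castSucc) a s)) := by ring
            _ ≤ φ r * ((g (Fin.last m) s * S m (fun j : Fin m => g j.castSucc) a s)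
                  * (h (Fin.last m) r * S m (fun j : Fin m => h j.castSucc) a r))
                + φ s * ((g (Fin.last m) r * S m (fun j : Fin m => g j.castSucc) a r)
                  * (h (Fin.last m) s * S m (fun j : Fin m => h j.castSucc) a s)) := hre
            _ = (g (Fin.last m) s * S m (fun j : Fin m => g j.castSucc) a s)
                * (φ r * h (Fin.last m) r * S m (fun j : Fin m => h j.castSucc) a r)
              + (g (Fin.last m) r * S m (fun j : Fin m => g j.castSucc) a r)
                * (φ s * h (Fin.last m) s * S m (fun j : Fin m => h j.castSucc) a s) := by
                ring
        intro s r has har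
        rcases le_total s r with hsr | hrs
        · exact main s r has hsr
        · rw [add_comm, add_comm ((g (Fin.last m) s * S m (fun j : Fin m => g j.castSucc) a s)
            * (φ r * h (Fin.last m) r * S m (fun j : Fin m => h j.castSucc) a r))]
          exact main r s har hrs
      refine setLIntegral_mono ?_ ?_
      · exact Measurable.lintegral_prod_right
          ((((hu3m.comp measurable_fst).mul (hu4m.comp measurable_snd)).add
            ((hu3m.comp measurable_snd).mul (hu4m.comp measurable_fst))))
      · intro xx hxx
        refine setLIntegral_mono ((measurable_const.mul hu4m).add
          (hu3m.mul measurable_const)) ?_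
        intro yy hyy
        exact ptwise xx yy hxx.1 hyy.1

lemma null_coord (n : ℕ) (j : Fin n) (c : ℝ) : volume {x : Fin n → ℝ | x j = c} = 0 := by
  classical
  have hset : {x : Fin n → ℝ | x j = c}
      = Set.pi Set.univ (fun i => if i = j then ({c} : Set ℝ) else Set.univ) := by
    ext x
    simp only [Set.mem_setOf_eq, Set.mem_univ_pi]
    constructor
    · intro hx i
      by_cases hi : i = j
      · subst hi; simp [hx]
      · simp [hi]
    · intro hx
      have := hx j
      simpa using this
  rw [hset, volume_pi_pi]
  refine Finset.prod_eq_zero (Finset.mem_univ j) ?_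
  simp

lemma ordered_ae (n : ℕ) : (orderedSimplex n : Set (Fin n → ℝ)) =ᵐ[volume] sSet n 0 1 := by
  rw [ae_eq_set]
  constructor
  · refine measure_mono_null
      (?_ : _ ⊆ ⋃ j : Fin n, ({x : Fin n → ℝ | x j = 0} ∪ {x | x j = 1})) ?_
    · intro x hx
      obtain ⟨⟨hIcc, hmono⟩, hnot⟩ := hx
      have : ∃ j, ¬ (x j ∈ Set.Ioo (0:ℝ) 1) := by
        by_contra hcon
        push_neg at hcon
        exact hnot ⟨hcon, hmono⟩
      obtain ⟨j, hj⟩ := this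
      rw [Set.mem_iUnion]
      refine ⟨j, ?_⟩
      rcases (hIcc j).1.lt_or_eq with h0 | h0
      · rcases (hIcc j).2.lt_or_eq with h1 | h1
        · exact absurd ⟨h0, h1⟩ hj
        · exact Or.inr h1
      · exact Or.inl h0.symm
    · exact measure_iUnion_null_iff.mpr fun j =>
        measure_union_null (null_coord n j 0) (null_coord n j 1)
  · have : sSet n 0 1 \ orderedSimplex n = ∅ := by
      rw [Set.diff_eq_empty]
      rintro x ⟨h1, h2⟩
      exact ⟨fun j => ⟨(h1 j).1.le, (h1 j).2.le⟩, h2⟩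
    rw [this]
    exact measure_empty

lemma volume_sSet_pos (m : ℕ) : 0 < volume (sSet m 0 1) := by
  have hsub : Set.pi Set.univ
      (fun j : Fin m => Set.Ioo ((j : ℝ) / m) (((j : ℝ) + 1) / m)) ⊆ sSet m 0 1 := by
    intro x hx
    rw [Set.mem_univ_pi] at hx
    have hmpos : ∀ j : Fin m, (0:ℝ) < m := fun j => by
      exact_mod_cast j.pos
    constructor
    · intro j
      have h1 := (hx j).1
      have h2 := (hx j).2
      have hm := hmpos j
      constructor
      · have : (0:ℝ) ≤ (j : ℝ) / m := by positivity
        linarith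
      · have hj1 : ((j : ℝ) + 1) / m ≤ 1 := by
          rw [div_le_one hm]
          have : (j : ℕ) + 1 ≤ m := j.isLt
          exact_mod_cast this
        linarith
    · intro j j' hjj'
      have h2 := (hx j).2
      have h1 := (hx j').1
      have hm := hmpos j
      have hcast : ((j : ℝ) + 1) ≤ (j' : ℝ) := by
        have : (j : ℕ) + 1 ≤ (j' : ℕ) := hjj'
        exact_mod_cast this
      have hdiv : ((j : ℝ) + 1) / m ≤ (j' : ℝ) / m := by
        gcongr
      calc x j < ((j : ℝ) + 1) / m := h2
        _ ≤ (j' : ℝ) / m := hdiv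
        _ < x j' := h1
  have hv : 0 < volume (Set.pi Set.univ
      (fun j : Fin m => Set.Ioo ((j : ℝ) / m) (((j : ℝ) + 1) / m))) := by
    rw [volume_pi_pi, CanonicallyOrderedAdd.prod_pos]
    intro j _
    rw [Real.volume_Ioo]
    apply ENNReal.ofReal_pos.mpr
    have hm : (0:ℝ) < m := by exact_mod_cast j.pos
    have hmm : ((j : ℝ) + 1) / m - (j : ℝ) / m = 1 / m := by ring
    rw [hmm]
    positivity
  exact lt_of_lt_of_le hv (measure_mono hsub)

lemma S_pos {m : ℕ} {g : Fin m → ℝ → ℝ≥0∞} (hg : ∀ j, Measurable (g j))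
    {c0 : ℝ≥0∞} (hc0 : c0 ≠ 0) (hgc : ∀ j s, c0 ≤ g j s) : 0 < S m g 0 1 := by
  have h1 : c0 ^ m * volume (sSet m 0 1) ≤ S m g 0 1 := by
    rw [S, ← setLIntegral_const (sSet m 0 1) (c0 ^ m)]
    refine setLIntegral_mono (measurable_prodfn hg) ?_
    intro x _
    calc (c0 : ℝ≥0∞) ^ m = ∏ _j : Fin m, c0 := by
          rw [Finset.prod_const, Finset.card_univ, Fintype.card_fin]
      _ ≤ ∏ j, g j (x j) := Finset.prod_le_prod' fun j _ => hgc j (x j)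
  refine lt_of_lt_of_le ?_ h1
  refine ENNReal.mul_pos (pow_ne_zero m hc0) ?_
  exact (volume_sSet_pos m).ne'

lemma absorb {n : ℕ} {g : Fin n → ℝ → ℝ≥0∞} (hg : ∀ j, Measurable (g j))
    (k : Fin n) {φ : ℝ → ℝ≥0∞} (t : ℝ)
    (hφdef : ∀ s, φ s = if s ≤ t then 1 else 0) :
    ∫⁻ x in sSet n 0 1 ∩ {x | x k ≤ t}, ∏ j, g j (x j) = S n (upd g k φ) 0 1 := by
  have hU : MeasurableSet {x : Fin n → ℝ | x k ≤ t} :=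
    measurableSet_le (measurable_pi_apply k) measurable_const
  have hrw : S n (upd g k φ) 0 1
      = ∫⁻ x in sSet n 0 1, Set.indicator {x : Fin n → ℝ | x k ≤ t}
          (fun x => ∏ j, g j (x j)) x := by
    rw [S]
    refine lintegral_congr fun x => ?_
    rw [prod_upd]
    by_cases hx : x k ≤ t
    · rw [hφdef, if_pos hx, one_mul,
        Set.indicator_of_mem (show x ∈ {x : Fin n → ℝ | x k ≤ t} from hx)]
    · rw [hφdef, if_neg hx, zero_mul,
        Set.indicator_of_notMem (show x ∉ {x : Fin n → ℝ | x k ≤ t} from hx)]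
  rw [hrw, lintegral_indicator hU, Measure.restrict_restrict hU, Set.inter_comm]

end Stmt9Aux

open Stmt9Aux

theorem stmt_9 (n : ℕ) (hn : 1 ≤ n) (l : ℝ) (ξ : Fin n → ℝ → ℝ)
    (hC1 : ∀ j, ContDiff ℝ 1 (ξ j))
    (hder : ∀ j, ∀ s ∈ Icc (0:ℝ) 1, l ≤ deriv (ξ j) s)
    (i : ℕ) (hi : 1 ≤ i) (hin : i ≤ n) (t : ℝ) (ht : t ∈ Icc (0:ℝ) 1) :
    (∫ s in orderedSimplex n ∩ {s | s ⟨i - 1, by omega⟩ ≤ t},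
        Real.exp (∑ j, ξ j (s j))) /
      (∫ s in orderedSimplex n, Real.exp (∑ j, ξ j (s j))) ≤
    (∫ s in orderedSimplex n ∩ {s | s ⟨i - 1, by omega⟩ ≤ t},
        Real.exp (l * ∑ j, s j)) /
      (∫ s in orderedSimplex n, Real.exp (l * ∑ j, s j)) := by
  classical
  have hk : i - 1 < n := by omega
  set k : Fin n := ⟨i - 1, hk⟩ with hkdef
  -- clamp
  set cl : ℝ → ℝ := fun s => max 0 (min 1 s) with hcldef
  have hcl_mem : ∀ s, cl s ∈ Set.Icc (0:ℝ) 1 :=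
    fun s => ⟨le_max_left _ _, max_le zero_le_one (min_le_left _ _)⟩
  have hcl_mono : ∀ u v : ℝ, u ≤ v → cl u ≤ cl v :=
    fun u v h => max_le_max le_rfl (min_le_min le_rfl h)
  have hcl_id : ∀ s ∈ Set.Icc (0:ℝ) 1, cl s = s := fun s hs => by
    rw [hcldef]
    simp only
    rw [min_eq_right hs.2, max_eq_right hs.1]
  have hcl_cont : Continuous cl := continuous_const.max (continuous_const.min continuous_id)
  have hxicont : ∀ j, Continuous (ξ j) := fun j => (hC1 j).continuous
  -- monotonicity of w ↦ ξ j w - l w on [0,1]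
  have hmono : ∀ j : Fin n, MonotoneOn (fun w => ξ j w - l * w) (Set.Icc 0 1) := by
    intro j
    refine monotoneOn_of_deriv_nonneg (convex_Icc 0 1) ?_ ?_ ?_
    · exact ((hxicont j).sub (continuous_const.mul continuous_id)).continuousOn
    · intro w hw
      exact (((hC1 j).differentiable one_ne_zero w).sub
        ((differentiable_id.const_mul l) w)).differentiableWithinAt
    · intro w hw
      rw [interior_Icc] at hw
      have hd1 : HasDerivAt (ξ j) (deriv (ξ j) w) w :=
        ((hC1 j).differentiable one_ne_zero w).hasDerivAt
      have hd2 : HasDerivAt (fun x : ℝ => l * x) l w := by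
        simpa using (hasDerivAt_id w).const_mul l
      have hder' : deriv (fun x => ξ j x - l * x) w = deriv (ξ j) w - l :=
        (hd1.sub hd2).deriv
      rw [hder', sub_nonneg]
      exact hder j w ⟨hw.1.le, hw.2.le⟩
  have hkey : ∀ (j : Fin n) (u v : ℝ), u ≤ v →
      ξ j (cl u) + l * cl v ≤ ξ j (cl v) + l * cl u := by
    intro j u v huv
    have := hmono j (hcl_mem u) (hcl_mem v) (hcl_mono u v huv)
    simp only at this
    linarith
  -- weights
  set g : Fin n → ℝ → ℝ≥0∞ := fun j s => ENNReal.ofReal (Real.exp (ξ j (cl s))) with hgdef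
  set h : Fin n → ℝ → ℝ≥0∞ := fun j s => ENNReal.ofReal (Real.exp (l * cl s)) with hhdef
  set φ : ℝ → ℝ≥0∞ := fun s => if s ≤ t then 1 else 0 with hφdef
  have hgm : ∀ j, Measurable (g j) := fun j =>
    (ENNReal.continuous_ofReal.comp
      (Real.continuous_exp.comp ((hxicont j).comp hcl_cont))).measurable
  have hhm : ∀ j, Measurable (h j) := fun j =>
    (ENNReal.continuous_ofReal.comp
      (Real.continuous_exp.comp (continuous_const.mul hcl_cont))).measurable
  have hφm : Measurable φ := by
    rw [hφdef]
    exact Measurable.ite measurableSet_Iic measurable_const measurable_const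
  have hφ1 : ∀ s, φ s ≤ 1 := by
    intro s
    by_cases hs : s ≤ t <;> simp [hφdef, hs]
  have hφa : ∀ u v : ℝ, u ≤ v → φ v ≤ φ u := by
    intro u v huv
    by_cases hv : v ≤ t
    · simp [hφdef, hv, le_trans huv hv]
    · simp [hφdef, hv]
  have hmlr : ∀ (j : Fin n) (u v : ℝ), u ≤ v → g j u * h j v ≤ g j v * h j u := by
    intro j u v huv
    rw [hgdef, hhdef]
    simp only
    rw [← ENNReal.ofReal_mul (Real.exp_pos _).le, ← ENNReal.ofReal_mul (Real.exp_pos _).le,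
      ← Real.exp_add, ← Real.exp_add]
    exact ENNReal.ofReal_le_ofReal (Real.exp_le_exp.mpr (hkey j u v huv))
  -- constants
  have hne : (Finset.univ : Finset (Fin n)).Nonempty := ⟨k, Finset.mem_univ k⟩
  set B : ℝ := max 0 (Finset.univ.sup' hne fun j => ξ j 1 - l) with hBdef
  set A : ℝ := min 0 (Finset.univ.inf' hne fun j => ξ j 0) with hAdef
  have hB0 : 0 ≤ B := le_max_left _ _
  have hA0 : A ≤ 0 := min_le_left _ _
  have habs : ∀ s, |l * cl s| ≤ |l| := by
    intro s
    rw [abs_mul]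
    calc |l| * |cl s| ≤ |l| * 1 := by
          refine mul_le_mul_of_nonneg_left ?_ (abs_nonneg l)
          rw [abs_of_nonneg (hcl_mem s).1]
          exact (hcl_mem s).2
      _ = |l| := mul_one _
  have hgB : ∀ (j : Fin n) (s : ℝ), ξ j (cl s) ≤ B + |l| := by
    intro j s
    have h1 := hmono j (hcl_mem s) (Set.mem_Icc.mpr ⟨zero_le_one, le_rfl⟩) (hcl_mem s).2
    simp only at h1
    have h2 : ξ j 1 - l ≤ B :=
      le_trans (Finset.le_sup' (fun j => ξ j 1 - l) (Finset.mem_univ j)) (le_max_right _ _)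
    have h3 : l * cl s ≤ |l| := le_trans (le_abs_self _) (habs s)
    have h4 : l * 1 = l := mul_one l
    linarith
  have hlA : ∀ s : ℝ, A - |l| ≤ l * cl s := by
    intro s
    have h3 : -|l| ≤ l * cl s := by
      have := neg_abs_le (l * cl s)
      have h4 := habs s
      linarith
    linarith
  have hgA : ∀ (j : Fin n) (s : ℝ), A - |l| ≤ ξ j (cl s) := by
    intro j s
    have h1 := hmono j (Set.mem_Icc.mpr ⟨le_rfl, zero_le_one⟩) (hcl_mem s) (hcl_mem s).1
    simp only at h1
    have h2 : A ≤ ξ j 0 :=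
      le_trans (min_le_right _ _) (Finset.inf'_le (fun j => ξ j 0) (Finset.mem_univ j))
    have h3 : -|l| ≤ l * cl s := by
      have := neg_abs_le (l * cl s)
      have h4 := habs s
      linarith
    have h5 : l * 0 = 0 := mul_zero l
    nlinarith [h1, h2, h3]
  set C : ℝ≥0∞ := ENNReal.ofReal (Real.exp (B + |l|)) with hCdef
  have hC : C ≠ ∞ := ENNReal.ofReal_ne_top
  have hgC : ∀ (j : Fin n) (s : ℝ), g j s ≤ C := fun j s =>
    ENNReal.ofReal_le_ofReal (Real.exp_le_exp.mpr (hgB j s))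
  have hhC : ∀ (j : Fin n) (s : ℝ), h j s ≤ C := fun j s =>
    ENNReal.ofReal_le_ofReal (Real.exp_le_exp.mpr (by
      have := le_trans (le_abs_self _) (habs s)
      linarith))
  set c0 : ℝ≥0∞ := ENNReal.ofReal (Real.exp (A - |l|)) with hc0def
  have hc0 : c0 ≠ 0 := (ENNReal.ofReal_pos.mpr (Real.exp_pos _)).ne'
  have hgc0 : ∀ (j : Fin n) (s : ℝ), c0 ≤ g j s := fun j s =>
    ENNReal.ofReal_le_ofReal (Real.exp_le_exp.mpr (hgA j s))
  have hhc0 : ∀ (j : Fin n) (s : ℝ), c0 ≤ h j s := fun j s =>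
    ENNReal.ofReal_le_ofReal (Real.exp_le_exp.mpr (hlA s))
  set K : ℝ≥0∞ := ENNReal.ofReal (Real.exp ((B + |l|) - (A - |l|))) with hKdef
  have hK : ∀ (j : Fin n) (s : ℝ), g j s ≤ K * h j s := by
    intro j s
    rw [hKdef, hhdef, hgdef]
    simp only
    rw [← ENNReal.ofReal_mul (Real.exp_pos _).le, ← Real.exp_add]
    refine ENNReal.ofReal_le_ofReal (Real.exp_le_exp.mpr ?_)
    have h1 := hgB j s
    have h2 := hlA s
    linarith
  -- main ENNReal inequality
  have hmain : S n (upd g k φ) 0 1 * S n h 0 1 ≤ S n g 0 1 * S n (upd h k φ) 0 1 := by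
    have h2pt := master n g h k φ hgm hhm hφm hφ1 hφa hmlr C hC hhC K hK 0 1 1
      zero_le_one le_rfl
    have h2 : (2:ℝ≥0∞) * (S n (upd g k φ) 0 1 * S n h 0 1)
        ≤ 2 * (S n g 0 1 * S n (upd h k φ) 0 1) := by
      rw [two_mul, two_mul]
      exact h2pt
    exact (ENNReal.mul_le_mul_iff_right two_ne_zero ENNReal.ofNat_ne_top).mp h2
  -- finiteness and positivity
  have hh'C : ∀ (j : Fin n) (s : ℝ), upd h k φ j s ≤ C := by
    intro j s
    by_cases hj : j = k
    · subst hj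
      rw [upd, Function.update_self]
      calc φ s * h k s ≤ 1 * h k s := mul_le_mul_left (hφ1 s) _
        _ = h k s := one_mul _
        _ ≤ C := hhC k s
    · rw [upd, Function.update_of_ne hj]
      exact hhC j s
  have hSg_fin : S n g 0 1 < ∞ := S_lt_top hC hgC 0 1
  have hSh_fin : S n h 0 1 < ∞ := S_lt_top hC hhC 0 1
  have hSh'_fin : S n (upd h k φ) 0 1 < ∞ := S_lt_top hC hh'C 0 1
  have hSg_pos : 0 < S n g 0 1 := S_pos hgm hc0 hgc0
  have hSh_pos : 0 < S n h 0 1 := S_pos hhm hc0 hhc0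
  -- rewriting the four integrals
  set U : Set (Fin n → ℝ) := {x | x k ≤ t} with hUdef
  have hinter_ae : (orderedSimplex n ∩ U : Set (Fin n → ℝ)) =ᵐ[volume] ((sSet n 0 1 ∩ U : Set (Fin n → ℝ)) : Set (Fin n → ℝ)) :=
    ae_eq_set_inter (ordered_ae n) (Filter.EventuallyEq.refl _ _)
  have hmemIcc : ∀ x ∈ sSet n 0 1, ∀ j : Fin n, x j ∈ Set.Icc (0:ℝ) 1 :=
    fun x hx j => ⟨(hx.1 j).1.le, (hx.1 j).2.le⟩
  have hprodg : ∀ x ∈ sSet n 0 1,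
      ENNReal.ofReal (Real.exp (∑ j, ξ j (x j))) = ∏ j, g j (x j) := by
    intro x hx
    rw [Real.exp_sum, ENNReal.ofReal_prod_of_nonneg (fun j _ => (Real.exp_pos _).le)]
    refine Finset.prod_congr rfl fun j _ => ?_
    rw [hgdef]
    simp only
    rw [hcl_id (x j) (hmemIcc x hx j)]
  have hprodh : ∀ x ∈ sSet n 0 1,
      ENNReal.ofReal (Real.exp (l * ∑ j, x j)) = ∏ j, h j (x j) := by
    intro x hx
    rw [Finset.mul_sum, Real.exp_sum,
      ENNReal.ofReal_prod_of_nonneg (fun j _ => (Real.exp_pos _).le)]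
    refine Finset.prod_congr rfl fun j _ => ?_
    rw [hhdef]
    simp only
    rw [hcl_id (x j) (hmemIcc x hx j)]
  have hcont_g : Continuous fun x : Fin n → ℝ => Real.exp (∑ j, ξ j (x j)) := by
    refine Real.continuous_exp.comp ?_
    exact continuous_finset_sum _ fun j _ => (hxicont j).comp (continuous_apply j)
  have hcont_h : Continuous fun x : Fin n → ℝ => Real.exp (l * ∑ j, x j) := by
    refine Real.continuous_exp.comp ?_
    exact continuous_const.mul (continuous_finset_sum _ fun j _ => continuous_apply j)
  have hUm : MeasurableSet U :=
    measurableSet_le (measurable_pi_apply k) measurable_const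
  -- the four identities
  have hdenP : (∫ s in orderedSimplex n, Real.exp (∑ j, ξ j (s j)))
      = (S n g 0 1).toReal := by
    rw [integral_eq_lintegral_of_nonneg_ae (Filter.Eventually.of_forall fun x => (Real.exp_pos _).le)
      hcont_g.aestronglyMeasurable.restrict]
    congr 1
    rw [setLIntegral_congr (ordered_ae n)]
    exact setLIntegral_congr_fun (measurableSet_sSet n 0 1)
      hprodg
  have hdenQ : (∫ s in orderedSimplex n, Real.exp (l * ∑ j, s j))
      = (S n h 0 1).toReal := by
    rw [integral_eq_lintegral_of_nonneg_ae (Filter.Eventually.of_forall fun x => (Real.exp_pos _).le)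
      hcont_h.aestronglyMeasurable.restrict]
    congr 1
    rw [setLIntegral_congr (ordered_ae n)]
    exact setLIntegral_congr_fun (measurableSet_sSet n 0 1)
      hprodh
  have hnumP : (∫ s in orderedSimplex n ∩ U, Real.exp (∑ j, ξ j (s j)))
      = (S n (upd g k φ) 0 1).toReal := by
    rw [integral_eq_lintegral_of_nonneg_ae (Filter.Eventually.of_forall fun x => (Real.exp_pos _).le)
      hcont_g.aestronglyMeasurable.restrict]
    congr 1
    rw [setLIntegral_congr hinter_ae]
    rw [setLIntegral_congr_fun ((measurableSet_sSet n 0 1).inter hUm)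
      (fun x hx => hprodg x hx.1)]
    exact absorb hgm k t (fun s => by rw [hφdef])
  have hnumQ : (∫ s in orderedSimplex n ∩ U, Real.exp (l * ∑ j, s j))
      = (S n (upd h k φ) 0 1).toReal := by
    rw [integral_eq_lintegral_of_nonneg_ae (Filter.Eventually.of_forall fun x => (Real.exp_pos _).le)
      hcont_h.aestronglyMeasurable.restrict]
    congr 1
    rw [setLIntegral_congr hinter_ae]
    rw [setLIntegral_congr_fun ((measurableSet_sSet n 0 1).inter hUm)
      (fun x hx => hprodh x hx.1)]
    exact absorb hhm k t (fun s => by rw [hφdef])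
  rw [show {s : Fin n → ℝ | s ⟨i - 1, hk⟩ ≤ t} = U from rfl] at *
  rw [hdenP, hdenQ, hnumP, hnumQ]
  rw [div_le_div_iff₀ (ENNReal.toReal_pos hSg_pos.ne' hSg_fin.ne)
    (ENNReal.toReal_pos hSh_pos.ne' hSh_fin.ne)]
  rw [← ENNReal.toReal_mul, ← ENNReal.toReal_mul]
  refine ENNReal.toReal_mono (ENNReal.mul_ne_top hSh'_fin.ne hSg_fin.ne) ?_
  exact hmain.trans_eq (mul_comm _ _)
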